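/- arXiv:2506.10817 — 3 statements merged into one kernel-verified Lean document; each statement's English description precedes it below -/
import Mathlib

section
/- For every λ > 0, ε > 0, γ ∈ (0,1], and all reals x, y with |x - y| < ε, the centered Gaussian density satisfies φ_λ(y) ≥ (2πλ)^{γ/2} · φ_λ(x)^{1+γ} · exp(-2ε²/(γλ)). -/
noncomputable def gaussDensity (l x : ℝ) : ℝ :=
  (Real.sqrt (2 * Real.pi * l))⁻¹ * Real.exp (-(x ^ 2) / (2 * l))

theorem gauss_nearby_lower_bound (l ε γ x y : ℝ) (hl : 0 < l) (hε : 0 < ε)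
    (hγ0 : 0 < γ) (hγ1 : γ ≤ 1) (hxy : |x - y| < ε) :
    (2 * Real.pi * l) ^ (γ / 2) * gaussDensity l x ^ (1 + γ) *
        Real.exp (-(2 * ε ^ 2) / (γ * l)) ≤ gaussDensity l y := by
  have hπ := Real.pi_pos
  have h2πl : (0:ℝ) < 2 * Real.pi * l := by positivity
  have h2l : (0:ℝ) < 2 * l := by linarith
  have hγl : (0:ℝ) < γ * l := by positivity
  set S := Real.sqrt (2 * Real.pi * l) with hSdef
  have hS : 0 < S := Real.sqrt_pos.mpr h2πl
  have hS2 : S ^ 2 = 2 * Real.pi * l := Real.sq_sqrt h2πl.le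
  obtain ⟨h1, h2⟩ := abs_lt.mp hxy
  have key : y ^ 2 ≤ (1 + γ) * x ^ 2 + 4 * ε ^ 2 / γ := by
    have key2 : y ^ 2 - (1 + γ) * x ^ 2 ≤ 4 * ε ^ 2 / γ := by
      rw [le_div_iff₀ hγ0]
      nlinarith [sq_nonneg (γ * x - (x - y)), sq_nonneg (γ * x + (x - y)),
        mul_pos (by linarith : (0:ℝ) < ε - (x - y)) (by linarith : (0:ℝ) < ε + (x - y)),
        hγ0.le, hγ1]
    linarith
  have hA : (-(x ^ 2) / (2 * l)) * (1 + γ) + (-(2 * ε ^ 2) / (γ * l))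
      ≤ -(y ^ 2) / (2 * l) := by
    have heq : -(y ^ 2) / (2 * l) - ((-(x ^ 2) / (2 * l)) * (1 + γ) + (-(2 * ε ^ 2) / (γ * l)))
        = ((1 + γ) * x ^ 2 + 4 * ε ^ 2 / γ - y ^ 2) / (2 * l) := by
      field_simp
      ring
    have hnn : (0:ℝ) ≤ ((1 + γ) * x ^ 2 + 4 * ε ^ 2 / γ - y ^ 2) / (2 * l) :=
      div_nonneg (by linarith) h2l.le
    linarith [heq ▸ hnn]
  unfold gaussDensity
  rw [← hSdef]
  have hL : (2 * Real.pi * l) ^ (γ / 2) * (S⁻¹ * Real.exp (-(x ^ 2) / (2 * l))) ^ (1 + γ) *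
      Real.exp (-(2 * ε ^ 2) / (γ * l))
      = S⁻¹ * Real.exp ((-(x ^ 2) / (2 * l)) * (1 + γ) + (-(2 * ε ^ 2) / (γ * l))) := by
    rw [Real.mul_rpow (inv_nonneg.mpr hS.le) (Real.exp_pos _).le,
      Real.rpow_def_of_pos (Real.exp_pos _), Real.log_exp,
      Real.inv_rpow hS.le, ← Real.rpow_neg hS.le, ← hS2, ← Real.rpow_natCast S 2,
      ← Real.rpow_mul hS.le, Real.exp_add]
    rw [show ((2:ℕ):ℝ) * (γ / 2) = γ by push_cast; ring]
    have hSS : S ^ (-(1 + γ)) * S ^ γ = S⁻¹ := by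
      rw [← Real.rpow_add hS, show -(1 + γ) + γ = (-1:ℝ) by ring, Real.rpow_neg_one]
    rw [← hSS]
    ring
  rw [hL]
  exact mul_le_mul_of_nonneg_left (Real.exp_le_exp.mpr hA) (inv_nonneg.mpr hS.le)
end

section
/- Let X, Y, Z be real random variables with Y integrable, Z independent of (X,Y), and Z admitting a strictly positive bounded density f_Z. Set ζ = X + Z. Then almost surely, E[Y | ζ] = E[Y · f_Z(x − X)]|_{x=ζ} / E[f_Z(x − X)]|_{x=ζ}. -/
open MeasureTheory ProbabilityTheory
open scoped ENNReal NNReal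

theorem condExp_convolution_formula {Ω : Type*} [MeasurableSpace Ω]
    (μ : Measure Ω) [IsProbabilityMeasure μ]
    (X Y Z : Ω → ℝ) (hX : Measurable X) (hY : Measurable Y) (hZ : Measurable Z)
    (hYint : Integrable Y μ)
    (fZ : ℝ → ℝ) (hfZmeas : Measurable fZ) (hfZpos : ∀ z, 0 < fZ z)
    (hfZbdd : ∃ M : ℝ, ∀ z, fZ z ≤ M)
    (hdens : Measure.map Z μ = volume.withDensity fun z => ENNReal.ofReal (fZ z))
    (hindep : IndepFun (fun ω => (X ω, Y ω)) Z μ) :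
    μ[Y | MeasurableSpace.comap (fun ω => X ω + Z ω) inferInstance] =ᵐ[μ]
      fun ω =>
        (∫ a, Y a * fZ ((X ω + Z ω) - X a) ∂μ) / (∫ a, fZ ((X ω + Z ω) - X a) ∂μ) := by
  obtain ⟨M, hM⟩ := hfZbdd
  set ζ : Ω → ℝ := fun ω => X ω + Z ω with hζdef
  have hζ : Measurable ζ := hX.add hZ
  set N : ℝ → ℝ := fun t => ∫ a, Y a * fZ (t - X a) ∂μ with hNdef
  set h : ℝ → ℝ := fun t => ∫ a, fZ (t - X a) ∂μ with hhdef
  have hm : MeasurableSpace.comap ζ inferInstance ≤ ‹MeasurableSpace Ω› := hζ.comap_le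
  -- basic facts about fZ
  have hρ : IsProbabilityMeasure (Measure.map Z μ) := Measure.isProbabilityMeasure_map hZ.aemeasurable
  have hfZ_lint : ∫⁻ z, ENNReal.ofReal (fZ z) = 1 := by
    have h1 := hρ.measure_univ
    rw [hdens, withDensity_apply _ MeasurableSet.univ, Measure.restrict_univ] at h1
    exact h1
  have hfZ_int : Integrable fZ (volume : Measure ℝ) := by
    refine ⟨hfZmeas.aestronglyMeasurable, ?_⟩
    rw [hasFiniteIntegral_iff_ofReal (ae_of_all _ fun z => (hfZpos z).le), hfZ_lint]
    exact ENNReal.one_lt_top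
  have hfZ_integral : ∫ z, fZ z = 1 := by
    rw [integral_eq_lintegral_of_nonneg_ae (ae_of_all _ fun z => (hfZpos z).le)
      hfZmeas.aestronglyMeasurable, hfZ_lint, ENNReal.toReal_one]
  have hfZ_shift : ∀ x : ℝ, ∫ t, fZ (t - x) = 1 := fun x => by
    rw [integral_sub_right_eq_self fZ x, hfZ_integral]
  -- measures
  set ν : Measure (ℝ × ℝ) := Measure.map (fun ω => (X ω, Y ω)) μ with hνdef
  have hνprob : IsProbabilityMeasure ν := by
    rw [hνdef]; exact Measure.isProbabilityMeasure_map (hX.prodMk hY).aemeasurable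
  set νX : Measure ℝ := Measure.map X μ with hνXdef
  have hνXprob : IsProbabilityMeasure νX := by
    rw [hνXdef]; exact Measure.isProbabilityMeasure_map hX.aemeasurable
  have hYν : Integrable (fun p : ℝ × ℝ => p.2) ν := by
    rw [hνdef]
    exact (integrable_map_measure measurable_snd.aestronglyMeasurable
      (hX.prodMk hY).aemeasurable).mpr hYint
  have hpairXZ : Measure.map (fun ω => (X ω, Z ω)) μ = νX.prod (Measure.map Z μ) := by
    rw [hνXdef]
    exact (indepFun_iff_map_prod_eq_prod_map_map hX.aemeasurable hZ.aemeasurable).mp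
      (hindep.comp measurable_fst measurable_id)
  have hpairT : Measure.map (fun ω => ((X ω, Y ω), Z ω)) μ = ν.prod (Measure.map Z μ) := by
    rw [hνdef]
    exact (indepFun_iff_map_prod_eq_prod_map_map (hX.prodMk hY).aemeasurable
      hZ.aemeasurable).mp hindep
  -- measurability of N and h
  have hmeas_h : StronglyMeasurable h := by
    have : StronglyMeasurable fun p : ℝ × Ω => fZ (p.1 - X p.2) :=
      (hfZmeas.comp (measurable_fst.sub (hX.comp measurable_snd))).stronglyMeasurable
    exact this.integral_prod_right'
  have hmeas_N : StronglyMeasurable N := by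
    have : StronglyMeasurable fun p : ℝ × Ω => Y p.2 * fZ (p.1 - X p.2) :=
      ((hY.comp measurable_snd).mul
        (hfZmeas.comp (measurable_fst.sub (hX.comp measurable_snd)))).stronglyMeasurable
    exact this.integral_prod_right'
  have hint_ht : ∀ t, Integrable (fun a => fZ (t - X a)) μ := fun t => by
    refine Integrable.mono' (integrable_const M)
      (hfZmeas.comp (measurable_const.sub hX)).aestronglyMeasurable (ae_of_all _ fun a => ?_)
    rw [Real.norm_eq_abs, abs_of_pos (hfZpos _)]
    exact hM _
  have hhpos : ∀ t, 0 < h t := fun t => by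
    rw [hhdef]
    rw [integral_pos_iff_support_of_nonneg (fun a => (hfZpos _).le) (hint_ht t)]
    have hsupp : Function.support (fun a => fZ (t - X a)) = Set.univ :=
      Set.eq_univ_of_forall fun a => (hfZpos _).ne'
    rw [hsupp, measure_univ]
    exact zero_lt_one
  -- law of ζ
  have hlaw : Measure.map ζ μ = volume.withDensity (fun t => ENNReal.ofReal (h t)) := by
    have hζcomp : Measure.map ζ μ
        = Measure.map (fun p : ℝ × ℝ => p.1 + p.2) (Measure.map (fun ω => (X ω, Z ω)) μ) := by
      rw [Measure.map_map measurable_add (hX.prodMk hZ)]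
      rfl
    rw [hζcomp, hpairXZ, hdens]
    ext B hB
    rw [Measure.map_apply measurable_add hB, Measure.prod_apply (measurable_add hB),
      withDensity_apply _ hB]
    have key : ∀ x : ℝ,
        (volume.withDensity fun z => ENNReal.ofReal (fZ z))
            (Prod.mk x ⁻¹' ((fun p : ℝ × ℝ => p.1 + p.2) ⁻¹' B))
          = ∫⁻ t in B, ENNReal.ofReal (fZ (t - x)) := by
      intro x
      have hpre : (Prod.mk x ⁻¹' ((fun p : ℝ × ℝ => p.1 + p.2) ⁻¹' B))
          = (fun z => x + z) ⁻¹' B := rfl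
      rw [hpre, withDensity_apply _ ((measurable_const_add x) hB)]
      have hmp := (measurePreserving_add_left (volume : Measure ℝ) x).restrict_preimage hB
      have hcomp := hmp.lintegral_comp
        (f := fun t => ENNReal.ofReal (fZ (t - x)))
        ((hfZmeas.comp (measurable_id.sub measurable_const)).ennreal_ofReal)
      simp only [add_sub_cancel_left] at hcomp
      exact hcomp
    have hswapmeas : AEMeasurable
        (Function.uncurry fun (x t : ℝ) => ENNReal.ofReal (fZ (t - x)))
        (νX.prod (volume.restrict B)) :=
      ((hfZmeas.comp (measurable_snd.sub measurable_fst)).ennreal_ofReal).aemeasurable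
    calc ∫⁻ x, (volume.withDensity fun z => ENNReal.ofReal (fZ z))
            (Prod.mk x ⁻¹' ((fun p : ℝ × ℝ => p.1 + p.2) ⁻¹' B)) ∂νX
        = ∫⁻ x, (∫⁻ t in B, ENNReal.ofReal (fZ (t - x))) ∂νX :=
          lintegral_congr key
      _ = ∫⁻ t in B, (∫⁻ x, ENNReal.ofReal (fZ (t - x)) ∂νX) :=
          lintegral_lintegral_swap hswapmeas
      _ = ∫⁻ t in B, ENNReal.ofReal (h t) := by
          refine lintegral_congr fun t => ?_
          have hi : Integrable (fun x => fZ (t - x)) νX := by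
            refine Integrable.mono' (integrable_const M)
              (hfZmeas.comp (measurable_const.sub measurable_id)).aestronglyMeasurable
              (ae_of_all _ fun x => ?_)
            rw [Real.norm_eq_abs, abs_of_pos (hfZpos _)]
            exact hM _
          rw [← ofReal_integral_eq_lintegral_ofReal hi (ae_of_all _ fun x => (hfZpos _).le)]
          congr 1
          rw [hhdef, hνXdef]
          exact integral_map hX.aemeasurable (f := fun x => fZ (t - x))
            ((hfZmeas.comp (measurable_const.sub measurable_id)).aestronglyMeasurable)
  -- integrability of the big product function
  have hbig : Integrable (fun p : (ℝ × ℝ) × ℝ => p.1.2 * fZ (p.2 - p.1.1)) (ν.prod volume) := by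
    have hmeasF : AEStronglyMeasurable (fun p : (ℝ × ℝ) × ℝ => p.1.2 * fZ (p.2 - p.1.1))
        (ν.prod volume) :=
      (measurable_fst.snd.mul
        (hfZmeas.comp (measurable_snd.sub measurable_fst.fst))).aestronglyMeasurable
    rw [integrable_prod_iff hmeasF]
    constructor
    · exact ae_of_all _ fun x => (hfZ_int.comp_sub_right x.1).const_mul x.2
    · refine hYν.abs.congr (ae_of_all _ fun x => ?_)
      have hn : ∀ t : ℝ, ‖x.2 * fZ (t - x.1)‖ = |x.2| * fZ (t - x.1) := fun t => by
        rw [norm_mul, Real.norm_eq_abs, Real.norm_eq_abs, abs_of_pos (hfZpos _)]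
      simp only [hn]
      rw [integral_const_mul, hfZ_shift x.1, mul_one]
  have hNint : Integrable N volume := by
    refine hbig.integral_prod_right.congr (ae_of_all _ fun t => ?_)
    rw [hNdef, hνdef]
    exact integral_map (hX.prodMk hY).aemeasurable (f := fun p : ℝ × ℝ => p.2 * fZ (t - p.1))
      ((measurable_snd.mul
        (hfZmeas.comp (measurable_const.sub measurable_fst))).aestronglyMeasurable)
  -- candidate function
  have hg : Measurable (fun t => N t / h t) := hmeas_N.measurable.div hmeas_h.measurable
  have hgζ_int : Integrable (fun ω => N (ζ ω) / h (ζ ω)) μ := by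
    have hmapint : Integrable (fun t => N t / h t) (Measure.map ζ μ) := by
      rw [hlaw]
      rw [integrable_withDensity_iff (hmeas_h.measurable.ennreal_ofReal)
        (ae_of_all _ fun t => ENNReal.ofReal_lt_top)]
      refine hNint.congr (ae_of_all _ fun t => ?_)
      show N t = N t / h t * (ENNReal.ofReal (h t)).toReal
      rw [ENNReal.toReal_ofReal (hhpos t).le, div_mul_cancel₀ _ (hhpos t).ne']
    exact (integrable_map_measure hg.aestronglyMeasurable hζ.aemeasurable).mp hmapint
  -- Fact L : ∫_{ζ⁻¹ B} Y = ∫_B N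
  have factL : ∀ B : Set ℝ, MeasurableSet B →
      ∫ ω in ζ ⁻¹' B, Y ω ∂μ = ∫ t in B, N t := by
    intro B hB
    have hΦmeas : Measurable (fun p : (ℝ × ℝ) × ℝ =>
        p.1.2 * Set.indicator B (fun _ => (1 : ℝ)) (p.1.1 + p.2)) :=
      measurable_fst.snd.mul
        ((measurable_const.indicator hB).comp (measurable_fst.fst.add measurable_snd))
    have h1 : ∫ ω in ζ ⁻¹' B, Y ω ∂μ
        = ∫ ω, Y ω * Set.indicator B (fun _ => (1 : ℝ)) (ζ ω) ∂μ := by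
      rw [← integral_indicator (hζ hB)]
      congr 1
      ext ω
      by_cases hω : ζ ω ∈ B
      · simp [Set.indicator_of_mem, hω, Set.indicator_of_mem (Set.mem_preimage.mpr hω)]
      · simp [Set.indicator_of_notMem, hω]
    have h2 : ∫ ω, Y ω * Set.indicator B (fun _ => (1 : ℝ)) (ζ ω) ∂μ
        = ∫ p : (ℝ × ℝ) × ℝ,
            p.1.2 * Set.indicator B (fun _ => (1 : ℝ)) (p.1.1 + p.2) ∂(ν.prod (Measure.map Z μ)) := by
      rw [← hpairT, integral_map ((hX.prodMk hY).prodMk hZ).aemeasurable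
        hΦmeas.aestronglyMeasurable]
    have hYprod : Integrable (fun p : (ℝ × ℝ) × ℝ => p.1.2) (ν.prod (Measure.map Z μ)) := by
      rw [← hpairT]
      exact (integrable_map_measure measurable_fst.snd.aestronglyMeasurable
        ((hX.prodMk hY).prodMk hZ).aemeasurable).mpr hYint
    have hΦint : Integrable (fun p : (ℝ × ℝ) × ℝ =>
        p.1.2 * Set.indicator B (fun _ => (1 : ℝ)) (p.1.1 + p.2)) (ν.prod (Measure.map Z μ)) := by
      refine hYprod.abs.mono' hΦmeas.aestronglyMeasurable (ae_of_all _ fun p => ?_)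
      rw [norm_mul]
      by_cases hp : p.1.1 + p.2 ∈ B
      · simp [Set.indicator_of_mem, hp]
      · simp [Set.indicator_of_notMem, hp, abs_nonneg]
    rw [h1, h2, integral_prod _ hΦint]
    have hdens' : Measure.map Z μ = volume.withDensity fun z => ((fZ z).toNNReal : ℝ≥0∞) := hdens
    have inner : ∀ x : ℝ × ℝ,
        ∫ z, x.2 * Set.indicator B (fun _ => (1 : ℝ)) (x.1 + z) ∂(Measure.map Z μ)
          = ∫ t in B, x.2 * fZ (t - x.1) := by
      intro x
      rw [hdens', integral_withDensity_eq_integral_smul hfZmeas.real_toNNReal]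
      have hsm : ∀ z : ℝ, (fZ z).toNNReal • (x.2 * Set.indicator B (fun _ => (1 : ℝ)) (x.1 + z))
          = fZ z * (x.2 * Set.indicator B (fun _ => (1 : ℝ)) (x.1 + z)) := fun z => by
        rw [NNReal.smul_def, Real.coe_toNNReal _ (hfZpos z).le, smul_eq_mul]
      simp only [hsm]
      have hshift := integral_sub_right_eq_self (μ := (volume : Measure ℝ))
        (fun z => fZ z * (x.2 * Set.indicator B (fun _ => (1 : ℝ)) (x.1 + z))) x.1
      rw [← hshift]
      have heq : ∀ t : ℝ,
          fZ (t - x.1) * (x.2 * Set.indicator B (fun _ => (1 : ℝ)) (x.1 + (t - x.1)))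
            = Set.indicator B (fun t => x.2 * fZ (t - x.1)) t := fun t => by
        rw [add_sub_cancel]
        by_cases ht : t ∈ B
        · simp only [Set.indicator_of_mem ht]
          ring
        · simp [Set.indicator_of_notMem ht]
      simp only [heq]
      rw [integral_indicator hB]
    simp only [inner]
    have hrestr : Integrable (Function.uncurry fun (x : ℝ × ℝ) (t : ℝ) => x.2 * fZ (t - x.1))
        (ν.prod (volume.restrict B)) := by
      have hpr : ν.prod (volume.restrict B) = (ν.prod volume).restrict (Set.univ ×ˢ B) := by
        rw [← Measure.prod_restrict, Measure.restrict_univ]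
      rw [hpr]
      exact hbig.integrableOn
    rw [integral_integral_swap hrestr]
    refine setIntegral_congr_fun hB fun t _ => ?_
    rw [hNdef, hνdef]
    exact integral_map (hX.prodMk hY).aemeasurable (f := fun p : ℝ × ℝ => p.2 * fZ (t - p.1))
      ((measurable_snd.mul
        (hfZmeas.comp (measurable_const.sub measurable_fst))).aestronglyMeasurable)
  -- Fact R : ∫_{ζ⁻¹ B} g∘ζ = ∫_B N
  have factR : ∀ B : Set ℝ, MeasurableSet B →
      ∫ ω in ζ ⁻¹' B, N (ζ ω) / h (ζ ω) ∂μ = ∫ t in B, N t := by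
    intro B hB
    rw [← integral_indicator (hζ hB)]
    have hcomp : (ζ ⁻¹' B).indicator (fun ω => N (ζ ω) / h (ζ ω))
        = fun ω => (B.indicator (fun t => N t / h t)) (ζ ω) := by
      ext ω
      by_cases hω : ζ ω ∈ B
      · simp [Set.indicator_of_mem, hω, Set.indicator_of_mem (Set.mem_preimage.mpr hω)]
      · simp [Set.indicator_of_notMem, hω]
    rw [hcomp, ← integral_map hζ.aemeasurable (hg.indicator hB).aestronglyMeasurable, hlaw,
      integral_indicator hB]
    have hlaw' : (volume.withDensity fun t => ENNReal.ofReal (h t))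
        = volume.withDensity fun t => ((h t).toNNReal : ℝ≥0∞) := rfl
    rw [hlaw', setIntegral_withDensity_eq_setIntegral_smul hmeas_h.measurable.real_toNNReal _ hB]
    refine setIntegral_congr_fun hB fun t _ => ?_
    rw [NNReal.smul_def, Real.coe_toNNReal _ (hhpos t).le, smul_eq_mul, mul_comm,
      div_mul_cancel₀ _ (hhpos t).ne']
  -- conclude
  haveI : SigmaFinite (μ.trim hm) := by
    have h1 : IsFiniteMeasure (μ.trim hm) := isFiniteMeasure_trim hm
    infer_instance
  refine (ae_eq_condExp_of_forall_setIntegral_eq hm hYint ?_ ?_ ?_).symm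
  · intro s hs hμs
    exact hgζ_int.integrableOn
  · intro s hs hμs
    obtain ⟨B, hB, rfl⟩ := hs
    rw [factR B hB]
    exact (factL B hB).symm
  · exact ⟨fun ω => N (ζ ω) / h (ζ ω),
      (hg.comp (Measurable.of_comap_le le_rfl)).stronglyMeasurable, Filter.EventuallyEq.rfl⟩
end

section
/- Let ξ, X be random variables with a² ≤ ξ² ≤ b² a.s. (0 < a ≤ b), let K : ℝ → [0,∞) be C¹ with bounded derivative, and δ > 0. Define Ψ^{−1/2}(y) = √((E[K(y−X)] + δ)/(E[ξ²K(y−X)] + δ)). Then y ↦ Ψ^{−1/2}(y) is Lipschitz continuous with Lipschitz constant at most C'·‖K'‖_∞/δ, where C' depends only on a and b. -/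
open MeasureTheory

theorem nadaraya_watson_inv_sqrt_lipschitz (a b : ℝ) (ha : 0 < a) (hab : a ≤ b) :
    ∃ C' : ℝ, 0 < C' ∧
      ∀ (Ω : Type) (_ : MeasurableSpace Ω) (μ : Measure Ω), IsProbabilityMeasure μ →
        ∀ (ξ X : Ω → ℝ), Measurable ξ → Measurable X →
          (∀ᵐ ω ∂μ, a ^ 2 ≤ (ξ ω) ^ 2 ∧ (ξ ω) ^ 2 ≤ b ^ 2) →
          ∀ (K : ℝ → ℝ), ContDiff ℝ 1 K → (∀ x, 0 ≤ K x) →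
            ∀ M : ℝ, (∀ x, |deriv K x| ≤ M) →
              ∀ δ : ℝ, 0 < δ →
                LipschitzWith (Real.toNNReal (C' * M / δ))
                  (fun y => Real.sqrt ((∫ ω, K (y - X ω) ∂μ + δ) /
                    (∫ ω, (ξ ω) ^ 2 * K (y - X ω) ∂μ + δ))) := by
  have hb : 0 < b := lt_of_lt_of_le ha hab
  set c1 : ℝ := max 1 (1 / a ^ 2) with hc1def
  have hc1 : (1:ℝ) ≤ c1 := le_max_left _ _
  have hc1a : (1:ℝ) ≤ c1 * a ^ 2 := by
    calc (1:ℝ) = (1 / a ^ 2) * a ^ 2 := by field_simp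
    _ ≤ c1 * a ^ 2 := by gcongr; exact le_max_right _ _
  refine ⟨max 1 b * (1 + c1 * b ^ 2), by positivity, ?_⟩
  intro Ω mΩ μ hμ ξ X hξ hX hbound K hK hKpos M hM δ hδ
  have hM0 : 0 ≤ M := (abs_nonneg _).trans (hM 0)
  have hKdiff : Differentiable ℝ K := hK.differentiable one_ne_zero
  have hKpt : ∀ u v, |K u - K v| ≤ M * |u - v| := by
    have hl : LipschitzWith M.toNNReal K := by
      apply lipschitzWith_of_nnnorm_deriv_le hKdiff
      intro x
      rw [← Real.toNNReal_coe (r := ‖deriv K x‖₊)]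
      exact Real.toNNReal_mono (by simpa [Real.norm_eq_abs] using hM x)
    intro u v
    have := hl.dist_le_mul u v
    simpa [Real.dist_eq, Real.coe_toNNReal _ hM0] using this
  have hmeas : ∀ y : ℝ, Measurable fun ω => K (y - X ω) :=
    fun y => hK.continuous.measurable.comp (measurable_const.sub hX)
  -- integrability is independent of y
  have key : ∀ y y' : ℝ, Integrable (fun ω => K (y - X ω)) μ →
      Integrable (fun ω => K (y' - X ω)) μ := by
    intro y y' hI
    refine Integrable.mono' (hI.add (integrable_const (M * |y' - y|)))
      ((hmeas y').aestronglyMeasurable) (Filter.Eventually.of_forall fun ω => ?_)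
    simp only [Pi.add_apply]
    rw [Real.norm_eq_abs, abs_of_nonneg (hKpos _)]
    have h1 : K (y' - X ω) - K (y - X ω) ≤ |K (y' - X ω) - K (y - X ω)| := le_abs_self _
    have h2 := hKpt (y' - X ω) (y - X ω)
    have h3 : y' - X ω - (y - X ω) = y' - y := by ring
    rw [h3] at h2
    linarith
  -- ξ² K integrable iff K integrable
  have hxi : ∀ y : ℝ, Integrable (fun ω => K (y - X ω)) μ →
      Integrable (fun ω => (ξ ω) ^ 2 * K (y - X ω)) μ := by
    intro y hI
    refine Integrable.mono' (hI.const_mul (b ^ 2))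
      (((hξ.pow_const 2).mul (hmeas y)).aestronglyMeasurable) ?_
    filter_upwards [hbound] with ω hω
    rw [Real.norm_eq_abs, abs_of_nonneg (mul_nonneg (sq_nonneg _) (hKpos _))]
    exact mul_le_mul_of_nonneg_right hω.2 (hKpos _)
  have hxi' : ∀ y : ℝ, ¬ Integrable (fun ω => K (y - X ω)) μ →
      ¬ Integrable (fun ω => (ξ ω) ^ 2 * K (y - X ω)) μ := by
    intro y hI hI2
    apply hI
    refine Integrable.mono' (hI2.const_mul (1 / a ^ 2))
      ((hmeas y).aestronglyMeasurable) ?_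
    filter_upwards [hbound] with ω hω
    rw [Real.norm_eq_abs, abs_of_nonneg (hKpos _)]
    rw [div_mul_eq_mul_div, one_mul, le_div_iff₀ (by positivity)]
    calc K (y - X ω) * a ^ 2 = a ^ 2 * K (y - X ω) := by ring
    _ ≤ (ξ ω) ^ 2 * K (y - X ω) := mul_le_mul_of_nonneg_right hω.1 (hKpos _)
  by_cases hint : Integrable (fun ω => K (0 - X ω)) μ
  · -- integrable case
    have hG : ∀ y : ℝ, Integrable (fun ω => K (y - X ω)) μ := fun y => key 0 y hint
    have hH : ∀ y : ℝ, Integrable (fun ω => (ξ ω) ^ 2 * K (y - X ω)) μ :=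
      fun y => hxi y (hG y)
    set G : ℝ → ℝ := fun y => ∫ ω, K (y - X ω) ∂μ with hGdef
    set H : ℝ → ℝ := fun y => ∫ ω, (ξ ω) ^ 2 * K (y - X ω) ∂μ with hHdef
    have hG0 : ∀ y, 0 ≤ G y := fun y => integral_nonneg fun ω => hKpos _
    have hH0 : ∀ y, 0 ≤ H y := fun y =>
      integral_nonneg fun ω => mul_nonneg (sq_nonneg _) (hKpos _)
    have hHa : ∀ y, a ^ 2 * G y ≤ H y := by
      intro y
      show a ^ 2 * ∫ ω, K (y - X ω) ∂μ ≤ H y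
      rw [← integral_const_mul]
      refine integral_mono_ae ((hG y).const_mul _) (hH y) ?_
      filter_upwards [hbound] with ω hω
      exact mul_le_mul_of_nonneg_right hω.1 (hKpos _)
    have hHb : ∀ y, H y ≤ b ^ 2 * G y := by
      intro y
      show H y ≤ b ^ 2 * ∫ ω, K (y - X ω) ∂μ
      rw [← integral_const_mul]
      refine integral_mono_ae (hH y) ((hG y).const_mul _) ?_
      filter_upwards [hbound] with ω hω
      exact mul_le_mul_of_nonneg_right hω.2 (hKpos _)
    have hGlip : ∀ y y', |G y - G y'| ≤ M * |y - y'| := by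
      intro y y'
      rw [hGdef, ← integral_sub (hG y) (hG y')]
      rw [← Real.norm_eq_abs]
      have := norm_integral_le_of_norm_le_const (μ := μ)
        (f := fun ω => K (y - X ω) - K (y' - X ω)) (C := M * |y - y'|)
        (Filter.Eventually.of_forall fun ω => by
          rw [Real.norm_eq_abs]
          have h2 := hKpt (y - X ω) (y' - X ω)
          have h3 : y - X ω - (y' - X ω) = y - y' := by ring
          rwa [h3] at h2)
      simpa using this
    have hHlip : ∀ y y', |H y - H y'| ≤ b ^ 2 * M * |y - y'| := by
      intro y y'
      rw [hHdef, ← integral_sub (hH y) (hH y')]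
      rw [← Real.norm_eq_abs]
      have := norm_integral_le_of_norm_le_const (μ := μ)
        (f := fun ω => (ξ ω) ^ 2 * K (y - X ω) - (ξ ω) ^ 2 * K (y' - X ω))
        (C := b ^ 2 * M * |y - y'|)
        (by
          filter_upwards [hbound] with ω hω
          rw [Real.norm_eq_abs, ← mul_sub, abs_mul, abs_of_nonneg (sq_nonneg (ξ ω))]
          have h2 := hKpt (y - X ω) (y' - X ω)
          have h3 : y - X ω - (y' - X ω) = y - y' := by ring
          rw [h3] at h2
          calc (ξ ω) ^ 2 * |K (y - X ω) - K (y' - X ω)| ≤ b ^ 2 * (M * |y - y'|) := by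
                apply mul_le_mul hω.2 h2 (abs_nonneg _) (sq_nonneg b)
          _ = b ^ 2 * M * |y - y'| := by ring)
      simpa using this
    -- positivity facts
    have hQpos : ∀ y, 0 < H y + δ := fun y => by linarith [hH0 y]
    have hPpos : ∀ y, 0 < G y + δ := fun y => by linarith [hG0 y]
    -- ratio bounds
    have hratio_le : ∀ y, (G y + δ) / (H y + δ) ≤ c1 := by
      intro y
      rw [div_le_iff₀ (hQpos y)]
      have : c1 * (H y + δ) ≥ c1 * (a ^ 2 * G y) + c1 * δ := by
        have := hHa y; nlinarith
      nlinarith [hG0 y, hHa y]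
    have hratio_ge : ∀ y, 1 / max 1 (b ^ 2) ≤ (G y + δ) / (H y + δ) := by
      intro y
      rw [div_le_div_iff₀ (by positivity) (hQpos y)] at *
      · nlinarith [hHb y, hG0 y, le_max_left (1:ℝ) (b^2), le_max_right (1:ℝ) (b^2)]
    have hsqrtmax : Real.sqrt (max 1 (b ^ 2)) = max 1 b := by
      rcases le_total b 1 with h | h
      · have : b ^ 2 ≤ 1 := by nlinarith
        rw [max_eq_left this, max_eq_left h, Real.sqrt_one]
      · have : (1:ℝ) ≤ b ^ 2 := by nlinarith
        rw [max_eq_right this, max_eq_right h, Real.sqrt_sq hb.le]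
    have hsqrt_ge : ∀ y, 1 / max 1 b ≤ Real.sqrt ((G y + δ) / (H y + δ)) := by
      intro y
      have h1 : Real.sqrt (1 / max 1 (b ^ 2)) ≤ Real.sqrt ((G y + δ) / (H y + δ)) :=
        Real.sqrt_le_sqrt (hratio_ge y)
      rwa [one_div, Real.sqrt_inv, hsqrtmax, ← one_div] at h1
    apply LipschitzWith.of_dist_le_mul
    intro y y'
    rw [Real.dist_eq, Real.dist_eq]
    set m : ℝ := max 1 b with hmdef
    have hm : (1:ℝ) ≤ m := le_max_left _ _
    have hm0 : (0:ℝ) < m := lt_of_lt_of_le one_pos hm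
    set r : ℝ := (G y + δ) / (H y + δ) with hrdef
    set r' : ℝ := (G y' + δ) / (H y' + δ) with hr'def
    have hr0 : 0 ≤ r := div_nonneg (hPpos y).le (hQpos y).le
    have hr'0 : 0 ≤ r' := div_nonneg (hPpos y').le (hQpos y').le
    have hδQ : ∀ z, δ ≤ H z + δ := fun z => by linarith [hH0 z]
    -- ratio Lipschitz estimate
    have hrr' : |r - r'| ≤ (1 + c1 * b ^ 2) * M / δ * |y - y'| := by
      have gen : ∀ A B A' B' : ℝ, B ≠ 0 → B' ≠ 0 →
          A / B - A' / B' = (A - A') / B + (A' / B') * ((B' - B) / B) := by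
        intro A B A' B' hB hB'
        field_simp
        ring
      have e : r - r' = (G y - G y') / (H y + δ)
          + ((G y' + δ) / (H y' + δ)) * ((H y' - H y) / (H y + δ)) := by
        have h := gen (G y + δ) (H y + δ) (G y' + δ) (H y' + δ)
          (hQpos y).ne' (hQpos y').ne'
        simpa only [add_sub_add_right_eq_sub] using h
      rw [e]
      have h1 : |(G y - G y') / (H y + δ)| ≤ M * |y - y'| / δ := by
        rw [abs_div, abs_of_pos (hQpos y)]
        exact div_le_div₀ (by positivity) (hGlip y y') hδ (hδQ y)
      have h2 : |((G y' + δ) / (H y' + δ)) * ((H y' - H y) / (H y + δ))|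
          ≤ c1 * (b ^ 2 * M * |y - y'| / δ) := by
        rw [abs_mul]
        refine mul_le_mul ?_ ?_ (abs_nonneg _) (by positivity)
        · rw [abs_of_nonneg (div_nonneg (hPpos y').le (hQpos y').le)]
          exact hratio_le y'
        · rw [abs_div, abs_of_pos (hQpos y)]
          have : |H y' - H y| ≤ b ^ 2 * M * |y - y'| := by
            have := hHlip y' y
            rwa [abs_sub_comm y' y] at this
          exact div_le_div₀ (by positivity) this hδ (hδQ y)
      calc |(G y - G y') / (H y + δ)
          + ((G y' + δ) / (H y' + δ)) * ((H y' - H y) / (H y + δ))|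
          ≤ |(G y - G y') / (H y + δ)|
            + |((G y' + δ) / (H y' + δ)) * ((H y' - H y) / (H y + δ))| := abs_add_le _ _
        _ ≤ M * |y - y'| / δ + c1 * (b ^ 2 * M * |y - y'| / δ) := add_le_add h1 h2
        _ = (1 + c1 * b ^ 2) * M / δ * |y - y'| := by ring
    -- sqrt estimate
    have hs : |Real.sqrt r - Real.sqrt r'| * (Real.sqrt r + Real.sqrt r') = |r - r'| := by
      have e : (Real.sqrt r - Real.sqrt r') * (Real.sqrt r + Real.sqrt r') = r - r' := by
        have e1 : Real.sqrt r ^ 2 = r := Real.sq_sqrt hr0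
        have e2 : Real.sqrt r' ^ 2 = r' := Real.sq_sqrt hr'0
        nlinarith [e1, e2]
      rw [← e, abs_mul, abs_of_nonneg (add_nonneg (Real.sqrt_nonneg _) (Real.sqrt_nonneg _))]
    have hsum : 2 / m ≤ Real.sqrt r + Real.sqrt r' := by
      have hy := hsqrt_ge y
      have hy' := hsqrt_ge y'
      have : 2 / m = 1 / m + 1 / m := by ring
      rw [this]
      exact add_le_add hy hy'
    have hsq : |Real.sqrt r - Real.sqrt r'| ≤ |r - r'| * m / 2 := by
      have h2 : |Real.sqrt r - Real.sqrt r'| * (2 / m) ≤ |r - r'| := by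
        rw [← hs]
        exact mul_le_mul_of_nonneg_left hsum (abs_nonneg _)
      rw [mul_div_assoc'] at h2
      rw [div_le_iff₀ hm0] at h2
      linarith
    -- combine
    have hcoe : ((Real.toNNReal (m * (1 + c1 * b ^ 2) * M / δ) : NNReal) : ℝ)
        = m * (1 + c1 * b ^ 2) * M / δ := by
      refine Real.coe_toNNReal _ ?_
      have h1 : 0 < 1 + c1 * b ^ 2 := by positivity
      positivity
    rw [hcoe]
    calc |Real.sqrt r - Real.sqrt r'| ≤ |r - r'| * m / 2 := hsq
      _ ≤ ((1 + c1 * b ^ 2) * M / δ * |y - y'|) * m / 2 := by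
          gcongr
      _ ≤ m * (1 + c1 * b ^ 2) * M / δ * |y - y'| := by
          rw [div_le_iff₀ (by norm_num : (0:ℝ) < 2)]
          have hnn : 0 ≤ (1 + c1 * b ^ 2) * M / δ * |y - y'| * m := by positivity
          have heq : (1 + c1 * b ^ 2) * M / δ * |y - y'| * m
              = m * (1 + c1 * b ^ 2) * M / δ * |y - y'| := by ring
          linarith
  · -- non-integrable case: the function is constant 1
    have hGnone : ∀ y : ℝ, ¬ Integrable (fun ω => K (y - X ω)) μ :=
      fun y hI => hint (key y 0 hI)
    have heq : (fun y => Real.sqrt ((∫ ω, K (y - X ω) ∂μ + δ) /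
        (∫ ω, (ξ ω) ^ 2 * K (y - X ω) ∂μ + δ))) = fun _ => (1:ℝ) := by
      funext y
      rw [integral_undef (hGnone y), integral_undef (hxi' y (hGnone y))]
      simp [div_self hδ.ne']
    rw [heq]
    exact (LipschitzWith.const 1).weaken zero_le
end
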